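/- Let n be a positive natural number, W an n×n real symmetric positive semidefinite matrix, and λ > 0, α > 0 real numbers. Then λ·W − (1/α)·W² is positive semidefinite if and only if α·λ·I_n − W is positive semidefinite. -/

import Mathlib

open Matrix

lemma conj_psd_iff {n : ℕ} (U : Matrix.unitaryGroup (Fin n) ℝ)
    (M : Matrix (Fin n) (Fin n) ℝ) :
    ((U : Matrix (Fin n) (Fin n) ℝ) * M * star (U : Matrix (Fin n) (Fin n) ℝ)).PosSemidef ↔ M.PosSemidef := by
  have hU : star (U : Matrix (Fin n) (Fin n) ℝ) * (U : Matrix (Fin n) (Fin n) ℝ) = 1 :=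
    (Matrix.mem_unitaryGroup_iff').mp U.2
  constructor
  · intro h
    have h2 := h.conjTranspose_mul_mul_same (U : Matrix (Fin n) (Fin n) ℝ)
    have key : (U : Matrix (Fin n) (Fin n) ℝ)ᴴ * ((U : Matrix (Fin n) (Fin n) ℝ) * M * star (U : Matrix (Fin n) (Fin n) ℝ)) * (U : Matrix (Fin n) (Fin n) ℝ) = M := by
      rw [Matrix.star_eq_conjTranspose] at hU
      rw [mul_assoc, mul_assoc, ← Matrix.star_eq_conjTranspose, Matrix.star_eq_conjTranspose, hU, mul_one, ← mul_assoc, hU, one_mul]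
    rwa [key] at h2
  · intro h
    have := h.mul_mul_conjTranspose_same (U : Matrix (Fin n) (Fin n) ℝ)
    simpa [Matrix.star_eq_conjTranspose] using this

theorem stmt10 (n : ℕ) (hn : 0 < n)
    (W : Matrix (Fin n) (Fin n) ℝ) (hW : W.PosSemidef)
    (lam alp : ℝ) (hlam : 0 < lam) (halp : 0 < alp) :
    (lam • W - (1 / alp) • (W * W)).PosSemidef ↔
      ((alp * lam) • (1 : Matrix (Fin n) (Fin n) ℝ) - W).PosSemidef := by
  have hH := hW.1
  set U := hH.eigenvectorUnitary with hUdef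
  set d : Fin n → ℝ := hH.eigenvalues with hddef
  have hspec : W = (U : Matrix (Fin n) (Fin n) ℝ) * diagonal d * star (U : Matrix (Fin n) (Fin n) ℝ) := by
    simpa using hH.spectral_theorem
  have hUU : star (U : Matrix (Fin n) (Fin n) ℝ) * (U : Matrix (Fin n) (Fin n) ℝ) = 1 :=
    (Matrix.mem_unitaryGroup_iff').mp U.2
  have hd : ∀ i, 0 ≤ d i := hW.eigenvalues_nonneg
  have e1 : lam • W - (1 / alp) • (W * W)
      = (U : Matrix (Fin n) (Fin n) ℝ) * (diagonal (fun i => lam * d i - (1 / alp) * (d i * d i))) * star (U : Matrix (Fin n) (Fin n) ℝ) := by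
    have hmid : ∀ X : Matrix (Fin n) (Fin n) ℝ,
        star (U : Matrix (Fin n) (Fin n) ℝ) * ((U : Matrix (Fin n) (Fin n) ℝ) * X) = X := by
      intro X; rw [← mul_assoc, hUU, one_mul]
    have hsq : ((U : Matrix (Fin n) (Fin n) ℝ) * diagonal d * star (U : Matrix (Fin n) (Fin n) ℝ)) *
        ((U : Matrix (Fin n) (Fin n) ℝ) * diagonal d * star (U : Matrix (Fin n) (Fin n) ℝ))
        = (U : Matrix (Fin n) (Fin n) ℝ) * (diagonal d * diagonal d) * star (U : Matrix (Fin n) (Fin n) ℝ) := by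
      simp only [mul_assoc, hmid]
    have hdiag : (diagonal (fun i => lam * d i - (1 / alp) * (d i * d i)) : Matrix (Fin n) (Fin n) ℝ)
        = lam • diagonal d - (1 / alp) • (diagonal d * diagonal d) := by
      rw [diagonal_mul_diagonal, ← diagonal_smul, ← diagonal_smul, ← diagonal_sub]
      rfl
    rw [hspec, hsq, hdiag, Matrix.mul_sub, Matrix.sub_mul, Matrix.mul_smul, Matrix.smul_mul,
      Matrix.mul_smul, Matrix.smul_mul]
  have e2 : (alp * lam) • (1 : Matrix (Fin n) (Fin n) ℝ) - W
      = (U : Matrix (Fin n) (Fin n) ℝ) * (diagonal (fun i => alp * lam - d i)) * star (U : Matrix (Fin n) (Fin n) ℝ) := by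
    conv_lhs => rw [hspec]
    have h1 : (alp * lam) • (1 : Matrix (Fin n) (Fin n) ℝ)
        = (U : Matrix (Fin n) (Fin n) ℝ) * ((alp * lam) • (1 : Matrix (Fin n) (Fin n) ℝ)) * star (U : Matrix (Fin n) (Fin n) ℝ) := by
      rw [Matrix.mul_smul, Matrix.smul_mul, mul_one]
      have : (U : Matrix (Fin n) (Fin n) ℝ) * star (U : Matrix (Fin n) (Fin n) ℝ) = 1 :=
        (Matrix.mem_unitaryGroup_iff).mp U.2
      rw [this]
    rw [h1, ← Matrix.sub_mul, ← Matrix.mul_sub]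
    congr 2
    rw [← diagonal_one, ← diagonal_smul, diagonal_sub]
    congr 1
    ext i
    simp
  rw [e1, e2, conj_psd_iff U, conj_psd_iff U,
    posSemidef_diagonal_iff, posSemidef_diagonal_iff]
  constructor
  · intro h i
    have h1 := h i
    have h2 := hd i
    have h1' : 0 ≤ alp * lam * d i - d i * d i := by
      have := mul_nonneg halp.le h1
      have hne : alp ≠ 0 := ne_of_gt halp
      field_simp at this
      nlinarith
    nlinarith [mul_pos halp hlam]
  · intro h i
    have h1 := h i
    have h2 := hd i
    have h1' : 0 ≤ alp * lam * d i - d i * d i := by nlinarith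
    have heq : lam * d i - 1 / alp * (d i * d i) = (alp * lam * d i - d i * d i) / alp := by
      field_simp
    rw [heq]
    exact div_nonneg h1' halp.le
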